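/- Let D be a finite homomorphism-homogeneous reflexive bidirectionally disconnected improper digraph, and let S, T be distinct θ(D)-classes with edges in both directions between S and T (S ⇄ T). If r → t → s for some r, s ∈ S and t ∈ T, then for every u ∈ T, either r → u → s or s → u → r. -/
import Mathlib


/-- A digraph `(V, E)` is homomorphism-homogeneous if every homomorphism between finitely
induced subdigraphs extends to an endomorphism. -/
def IsHomHom {V : Type*} (E : V → V → Prop) : Prop :=
  ∀ (U : Set V) (f : V → V), U.Finite →
    (∀ x ∈ U, ∀ y ∈ U, E x y → E (f x) (f y)) →
    ∃ g : V → V, (∀ x y, E x y → E (g x) (g y)) ∧ ∀ x ∈ U, g x = f x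

/-- The bidirectional connectedness relation `θ(D)`: the equivalence closure of the
double-edge relation `⇄`. -/
def Theta {V : Type*} (E : V → V → Prop) : V → V → Prop :=
  Relation.EqvGen (fun a b => E a b ∧ E b a)

/-- `E` is improper: neither symmetric nor antisymmetric. -/
def Improper {V : Type*} (E : V → V → Prop) : Prop :=
  (∃ x y, x ≠ y ∧ E x y ∧ E y x) ∧ (∃ x y, E x y ∧ ¬ E y x)

/-- `D` is bidirectionally disconnected: there is an edge between two distinct
`θ(D)`-classes. -/
def BidirDisconnected {V : Type*} (E : V → V → Prop) : Prop :=
  ∃ x y, ¬ Theta E x y ∧ E x y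

/-- Any endomorphism of `(V, E)` preserves `Theta`. -/
lemma theta_map {V : Type*} {E : V → V → Prop} {g : V → V}
    (hg : ∀ a b, E a b → E (g a) (g b)) :
    ∀ {p q : V}, Theta E p q → Theta E (g p) (g q) := by
  intro p q h
  induction h with
  | rel a b h => exact Relation.EqvGen.rel _ _ ⟨hg _ _ h.1, hg _ _ h.2⟩
  | refl a => exact Relation.EqvGen.refl _
  | symm a b _ ih => exact Relation.EqvGen.symm _ _ ih
  | trans a b c _ _ ih1 ih2 => exact Relation.EqvGen.trans _ _ _ ih1 ih2

/-- Let `D` be a finite homomorphism-homogeneous reflexive bidirectionally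
disconnected improper digraph, and let `S = [x]`, `T = [y]` be distinct `θ(D)`-classes
with edges in both directions between them. If `r → t → s` with `r, s ∈ S`, `t ∈ T`,
then for every `u ∈ T`, either `r → u → s` or `s → u → r`. -/
theorem stmt_15 {V : Type*} [Fintype V] (E : V → V → Prop)
    (hrefl : ∀ x, E x x) (himp : Improper E) (hbd : BidirDisconnected E)
    (hhh : IsHomHom E)
    (x y : V) (hxy : ¬ Theta E x y)
    (hST : ∃ s t, Theta E s x ∧ Theta E t y ∧ E s t)
    (hTS : ∃ s t, Theta E s x ∧ Theta E t y ∧ E t s)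
    (r s t : V) (hr : Theta E r x) (hs : Theta E s x) (ht : Theta E t y)
    (hrt : E r t) (hts : E t s) :
    ∀ u, Theta E u y → (E r u ∧ E u s) ∨ (E s u ∧ E u r) := by
  intro u hu
  have tsymm : ∀ {p q : V}, Theta E p q → Theta E q p :=
    fun h => Relation.EqvGen.symm _ _ h
  have ttrans : ∀ {p q w : V}, Theta E p q → Theta E q w → Theta E p w :=
    fun h1 h2 => Relation.EqvGen.trans _ _ _ h1 h2
  have htu : Theta E t u := ttrans ht (tsymm hu)
  -- r ≠ s : otherwise r ⇄ t would merge the classes of x and y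
  have hrs : r ≠ s := by
    rintro rfl
    exact hxy (ttrans (tsymm hr)
      (ttrans (Relation.EqvGen.rel _ _ ⟨hrt, hts⟩) ht))
  have hur : u ≠ r := fun h => hxy (ttrans (tsymm hr) (h ▸ hu))
  have hus : u ≠ s := fun h => hxy (ttrans (tsymm hs) (h ▸ hu))
  -- Key: we cannot collapse one of r, s onto the other (keeping u fixed),
  -- since that would produce a double edge between the two θ-classes.
  have key : ∀ c d : V, ((c = r ∧ d = s) ∨ (c = s ∧ d = r)) →
      (E d u → E c u) → (E u d → E u c) → False := by
    intro c d hcd H1 H2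
    have hcx : Theta E c x := by rcases hcd with ⟨rfl, rfl⟩ | ⟨rfl, rfl⟩ <;> assumption
    have hcd' : c ≠ d := by
      rcases hcd with ⟨rfl, rfl⟩ | ⟨rfl, rfl⟩
      · exact hrs
      · exact hrs.symm
    have hud : u ≠ d := by rcases hcd with ⟨rfl, rfl⟩ | ⟨rfl, rfl⟩ <;> assumption
    have huc : u ≠ c := by rcases hcd with ⟨rfl, rfl⟩ | ⟨rfl, rfl⟩ <;> assumption
    classical
    set f : V → V := fun z => if z = d then c else z with hf
    have fc : f c = c := by simp [hf, hcd']
    have fd : f d = c := by simp [hf]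
    have fu : f u = u := by simp [hf, hud]
    have hhom : ∀ p ∈ ({c, d, u} : Set V), ∀ q ∈ ({c, d, u} : Set V),
        E p q → E (f p) (f q) := by
      intro p hp q hq hpq
      simp only [Set.mem_insert_iff, Set.mem_singleton_iff] at hp hq
      rcases hp with rfl | rfl | rfl <;> rcases hq with rfl | rfl | rfl <;>
          simp only [fc, fd, fu] <;>
        first
          | exact hpq
          | exact hrefl _
          | exact H1 hpq
          | exact H2 hpq
    obtain ⟨g, hg, hgU⟩ := hhh ({c, d, u} : Set V) f (Set.toFinite _) hhom
    have hgc : g c = c := by rw [hgU c (by simp), fc]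
    have hgd : g d = c := by rw [hgU d (by simp), fd]
    have hgu : g u = u := by rw [hgU u (by simp), fu]
    -- both r and s are mapped to c by g
    have hgr : g r = c := by rcases hcd with ⟨rfl, rfl⟩ | ⟨rfl, rfl⟩ <;> assumption
    have hgs : g s = c := by rcases hcd with ⟨rfl, rfl⟩ | ⟨rfl, rfl⟩ <;> assumption
    -- now r → t → s gives c ⇄ g t, a double edge between the classes
    have h1 : E c (g t) := hgr ▸ hg _ _ hrt
    have h2 : E (g t) c := hgs ▸ hg _ _ hts
    have hθ : Theta E c (g t) := Relation.EqvGen.rel _ _ ⟨h1, h2⟩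
    have hgtu : Theta E (g t) u := hgu ▸ theta_map hg htu
    exact hxy (ttrans (tsymm hcx) (ttrans hθ (ttrans hgtu hu)))
  have d1 : ¬ ((E s u → E r u) ∧ (E u s → E u r)) :=
    fun h => key r s (Or.inl ⟨rfl, rfl⟩) h.1 h.2
  have d2 : ¬ ((E r u → E s u) ∧ (E u r → E u s)) :=
    fun h => key s r (Or.inr ⟨rfl, rfl⟩) h.1 h.2
  tauto
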